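/- Let P be a finite poset. (1) For every x ∈ P, the piecewise-linear toggles t_x : OR(P) → OR(P) and τ_x : C(P) → C(P) are involutions. (2) For x, y ∈ P, t_x and t_y commute if and only if neither x covers y nor y covers x. (3) For x, y ∈ P, τ_x and τ_y commute if and only if x = y or x and y are incomparable. -/

import Mathlib

open scoped Classical

variable {P : Type*} [PartialOrder P]

/-- Membership in the chain polytope `C(P)`: nonnegative labels whose sum along every
chain is at most 1. -/
def InChainPolytope (P : Type*) [PartialOrder P] (g : P → ℝ) : Prop :=
  (∀ x : P, 0 ≤ g x) ∧ ∀ l : List P, l.Chain' (· < ·) → (l.map g).sum ≤ 1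

/-- Membership in the order-reversing polytope `OR(P)`. -/
def InORPolytope (P : Type*) [PartialOrder P] (f : P → ℝ) : Prop :=
  (∀ x : P, 0 ≤ f x ∧ f x ≤ 1) ∧ ∀ ⦃x y : P⦄, x ≤ y → f y ≤ f x

/-- Membership in the order-preserving polytope `OP(P)`. -/
def InOPPolytope (P : Type*) [PartialOrder P] (f : P → ℝ) : Prop :=
  (∀ x : P, 0 ≤ f x ∧ f x ≤ 1) ∧ ∀ ⦃x y : P⦄, x ≤ y → f x ≤ f y

/-- The poset `P̂`, obtained from `P` by adjoining a minimum `m̂ = ⊥` and a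
maximum `M̂ = ⊤`. -/
abbrev PHat (P : Type*) := WithBot (WithTop P)

/-- The inclusion of `P` into `P̂`. -/
def toHat (x : P) : PHat P := ((x : WithTop P) : PHat P)

/-- Extension of an order-reversing labeling to `P̂`, with `f(m̂) = 1`, `f(M̂) = 0`. -/
noncomputable def hatOR (f : P → ℝ) : PHat P → ℝ := fun y =>
  WithBot.recBotCoe 1 (fun w => WithTop.recTopCoe 0 f w) y

/-- Extension of an order-preserving labeling to `P̂`, with `f(m̂) = 0`, `f(M̂) = 1`. -/
noncomputable def hatOP (f : P → ℝ) : PHat P → ℝ := fun y =>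
  WithBot.recBotCoe 0 (fun w => WithTop.recTopCoe 1 f w) y

/-- The saturated chains `x = y_1 ⋖ y_2 ⋖ ⋯ ⋖ y_k` from `x` up to a maximal element. -/
def maxChainsFrom (x : P) : Set (List P) :=
  {l | l.Chain' (· ⋖ ·) ∧ l.head? = some x ∧ ∃ z, l.getLast? = some z ∧ IsMax z}

/-- The saturated chains `y_1 ⋖ ⋯ ⋖ y_k = x` from a minimal element up to `x`. -/
def maxChainsTo (x : P) : Set (List P) :=
  {l | l.Chain' (· ⋖ ·) ∧ (∃ a, l.head? = some a ∧ IsMin a) ∧ l.getLast? = some x}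

/-- The maximal chains of `P` containing `e`. -/
def maxChainsThru (e : P) : Set (List P) :=
  {l | l.Chain' (· ⋖ ·) ∧ (∃ a, l.head? = some a ∧ IsMin a) ∧
    (∃ z, l.getLast? = some z ∧ IsMax z) ∧ e ∈ l}

/-- The transfer map `OR : C(P) → OR(P)`:
`(OR g)(x) = max{ g(y_1) + ⋯ + g(y_k) | x = y_1 ⋖ ⋯ ⋖ y_k, y_k maximal }`. -/
noncomputable def ORmap (g : P → ℝ) (x : P) : ℝ :=
  sSup ((fun l => (l.map g).sum) '' maxChainsFrom x)

/-- The transfer map `OP : C(P) → OP(P)`: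
`(OP g)(x) = max{ g(y_1) + ⋯ + g(y_k) | y_1 ⋖ ⋯ ⋖ y_k = x, y_1 minimal }`. -/
noncomputable def OPmap (g : P → ℝ) (x : P) : ℝ :=
  sSup ((fun l => (l.map g).sum) '' maxChainsTo x)

/-- The inverse transfer map: `(OR⁻¹ f)(x) = f(x) - max{ f(y) | y ⋗ x in P̂ }`. -/
noncomputable def ORinv (f : P → ℝ) (x : P) : ℝ :=
  f x - sSup {v : ℝ | ∃ y : PHat P, toHat x ⋖ y ∧ v = hatOR f y}

/-- The inverse transfer map: `(OP⁻¹ f)(x) = f(x) - max{ f(y) | y ⋖ x in P̂ }`. -/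
noncomputable def OPinv (f : P → ℝ) (x : P) : ℝ :=
  f x - sSup {v : ℝ | ∃ y : PHat P, y ⋖ toHat x ∧ v = hatOP f y}

/-- The piecewise-linear order ideal toggle on the order-reversing polytope:
the label of `e` is replaced by
`max{f(y) | y ⋗ e in P̂} + min{f(y) | y ⋖ e in P̂} - f(e)`. -/
noncomputable def tPL (e : P) (f : P → ℝ) : P → ℝ :=
  Function.update f e
    (sSup {v : ℝ | ∃ y : PHat P, toHat e ⋖ y ∧ v = hatOR f y}
      + sInf {v : ℝ | ∃ y : PHat P, y ⋖ toHat e ∧ v = hatOR f y} - f e)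

/-- The piecewise-linear antichain (chain polytope) toggle: the label of `e` is replaced
by `1 - max{ Σ g(y_i) | (y_1,…,y_k) a maximal chain of P containing e }`. -/
noncomputable def tauPL (e : P) (g : P → ℝ) : P → ℝ :=
  Function.update g e (1 - sSup ((fun l => (l.map g).sum) '' maxChainsThru e))

/-- The indicator function of a subset. -/
noncomputable def ind (S : Set P) : P → ℝ := fun x => if x ∈ S then 1 else 0

def listComp {α : Type*} (fs : List (α → α)) : α → α := fs.foldr (· ∘ ·) id


/-! ### Auxiliary lemmas -/

set_option linter.unusedSectionVars false

section AuxPL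

lemma toHat_covBy_toHat_iff {x y : P} : toHat x ⋖ toHat y ↔ x ⋖ y := by
  rw [toHat, toHat, WithBot.coe_covBy_coe, WithTop.coe_covBy_coe]

lemma toHat_lt_toHat_iff {x y : P} : toHat x < toHat y ↔ x < y := by
  rw [toHat, toHat, WithBot.coe_lt_coe, WithTop.coe_lt_coe]

lemma toHat_lt_top (x : P) : toHat x < (⊤ : PHat P) := by
  rw [toHat, ← WithBot.coe_top, WithBot.coe_lt_coe]; exact WithTop.coe_lt_top x

lemma toHat_covBy_top_iff {x : P} : toHat x ⋖ (⊤ : PHat P) ↔ IsMax x := by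
  rw [toHat, ← WithBot.coe_top, WithBot.coe_covBy_coe, WithTop.coe_covBy_top]

lemma bot_covBy_toHat_of_isMin {x : P} (h : IsMin x) : (⊥ : PHat P) ⋖ toHat x := by
  rw [toHat, WithBot.bot_covBy_coe]
  intro b hb
  cases b with
  | top => simp [top_le_iff] at hb
  | coe b => exact WithTop.coe_le_coe.mpr (h (WithTop.coe_le_coe.mp hb))

lemma covBy_toHat_cases {x : P} {z : PHat P} (h : toHat x ⋖ z) :
    z = ⊤ ∨ ∃ u : P, z = toHat u ∧ x ⋖ u := by
  cases z with
  | none => exact absurd h.lt (by exact not_lt_bot)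
  | some w =>
    cases w with
    | top => exact Or.inl rfl
    | coe u => exact Or.inr ⟨u, rfl, toHat_covBy_toHat_iff.mp h⟩

lemma cocovBy_toHat_cases {x : P} {z : PHat P} (h : z ⋖ toHat x) :
    z = ⊥ ∨ ∃ u : P, z = toHat u ∧ u ⋖ x := by
  cases z with
  | none => exact Or.inl rfl
  | some w =>
    cases w with
    | top => exact absurd h.lt not_top_lt
    | coe u => exact Or.inr ⟨u, rfl, toHat_covBy_toHat_iff.mp h⟩

lemma hatOR_toHat (f : P → ℝ) (u : P) : hatOR f (toHat u) = f u := rfl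
lemma hatOR_bot (f : P → ℝ) : hatOR f (⊥ : PHat P) = 1 := rfl
lemma hatOR_top (f : P → ℝ) : hatOR f (⊤ : PHat P) = 0 := rfl

lemma hatOR_update_ne (f : P → ℝ) (e : P) (c : ℝ) {z : PHat P} (hz : z ≠ toHat e) :
    hatOR (Function.update f e c) z = hatOR f z := by
  cases z with
  | none => rfl
  | some w =>
    cases w with
    | top => rfl
    | coe u =>
      have hu : u ≠ e := fun h => hz (by rw [h]; rfl)
      show Function.update f e c u = f u
      exact Function.update_of_ne hu _ _

/-- The set of labels on the upper covers of `e` in `P̂`. -/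
def SOR (f : P → ℝ) (e : P) : Set ℝ := {v : ℝ | ∃ y : PHat P, toHat e ⋖ y ∧ v = hatOR f y}

/-- The set of labels on the lower covers of `e` in `P̂`. -/
def IOR (f : P → ℝ) (e : P) : Set ℝ := {v : ℝ | ∃ y : PHat P, y ⋖ toHat e ∧ v = hatOR f y}

lemma tPL_def (e : P) (f : P → ℝ) :
    tPL e f = Function.update f e (sSup (SOR f e) + sInf (IOR f e) - f e) := rfl

lemma tauPL_def (e : P) (g : P → ℝ) :
    tauPL e g =
      Function.update g e (1 - sSup ((fun l => (l.map g).sum) '' maxChainsThru e)) := rfl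

lemma SOR_update (f : P → ℝ) (x e : P) (c : ℝ) (h : ¬ toHat x ⋖ toHat e) :
    SOR (Function.update f e c) x = SOR f x := by
  have key : ∀ z : PHat P, toHat x ⋖ z → hatOR (Function.update f e c) z = hatOR f z := by
    intro z hz
    refine hatOR_update_ne f e c ?_
    rintro rfl; exact h hz
  ext v
  constructor
  · rintro ⟨z, hz, rfl⟩; exact ⟨z, hz, key z hz⟩
  · rintro ⟨z, hz, rfl⟩; exact ⟨z, hz, (key z hz).symm⟩

lemma IOR_update (f : P → ℝ) (x e : P) (c : ℝ) (h : ¬ toHat e ⋖ toHat x) :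
    IOR (Function.update f e c) x = IOR f x := by
  have key : ∀ z : PHat P, z ⋖ toHat x → hatOR (Function.update f e c) z = hatOR f z := by
    intro z hz
    refine hatOR_update_ne f e c ?_
    rintro rfl; exact h hz
  ext v
  constructor
  · rintro ⟨z, hz, rfl⟩; exact ⟨z, hz, key z hz⟩
  · rintro ⟨z, hz, rfl⟩; exact ⟨z, hz, (key z hz).symm⟩

lemma exists_cover [Fintype P] (x : P) : ∃ z : PHat P, toHat x ⋖ z := by
  by_cases h : IsMax x
  · exact ⟨⊤, toHat_covBy_top_iff.mpr h⟩
  · obtain ⟨u, hu⟩ := exists_covBy_of_wellFoundedLT h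
    exact ⟨toHat u, toHat_covBy_toHat_iff.mpr hu⟩

lemma exists_cocover [Fintype P] (x : P) : ∃ z : PHat P, z ⋖ toHat x := by
  by_cases h : IsMin x
  · exact ⟨⊥, bot_covBy_toHat_of_isMin h⟩
  · obtain ⟨u, hu⟩ := exists_covBy_of_wellFoundedGT h
    exact ⟨toHat u, toHat_covBy_toHat_iff.mpr hu⟩

lemma chain_cov_lt {l : List P} (h : l.Chain' (· ⋖ ·)) : l.Chain' (· < ·) :=
  List.IsChain.imp (fun _ _ hc => hc.lt) h

lemma chain_pairwise_lt {l : List P} (h : l.Chain' (· ⋖ ·)) : l.Pairwise (· < ·) :=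
  List.isChain_iff_pairwise.mp (chain_cov_lt h)

lemma chain_nodup {l : List P} (h : l.Chain' (· ⋖ ·)) : l.Nodup :=
  (chain_pairwise_lt h).imp (fun hc => hc.ne)

lemma chain_comparable {l : List P} (h : l.Chain' (· ⋖ ·)) {a b : P}
    (ha : a ∈ l) (hb : b ∈ l) : a ≤ b ∨ b ≤ a := by
  rcases eq_or_ne a b with rfl | hne
  · exact Or.inl le_rfl
  · have hp : l.Pairwise (fun a b => a ≤ b ∨ b ≤ a) :=
      (chain_pairwise_lt h).imp (fun hc => Or.inl hc.le)
    haveI : Std.Symm (fun a b : P => a ≤ b ∨ b ≤ a) := ⟨fun _ _ hab => hab.symm⟩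
    exact hp.forall ha hb hne

lemma sum_map_update_of_not_mem (g : P → ℝ) (x : P) (c : ℝ) {l : List P} (hx : x ∉ l) :
    (l.map (Function.update g x c)).sum = (l.map g).sum := by
  congr 1
  exact List.map_congr_left fun a ha =>
    Function.update_of_ne (fun h => hx (by rw [← h]; exact ha)) _ _

lemma sum_map_update_of_mem (g : P → ℝ) (x : P) (c : ℝ) {l : List P}
    (hl : l.Nodup) (hx : x ∈ l) :
    (l.map (Function.update g x c)).sum = (l.map g).sum + (c - g x) := by
  induction l with
  | nil => simp at hx
  | cons a t ih =>
    rcases List.mem_cons.mp hx with rfl | hx'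
    · have hxt : x ∉ t := (List.nodup_cons.mp hl).1
      simp only [List.map_cons, List.sum_cons, Function.update_self,
        sum_map_update_of_not_mem g x c hxt]
      ring
    · have hax : a ≠ x := fun h => (List.nodup_cons.mp hl).1 (h ▸ hx')
      simp only [List.map_cons, List.sum_cons, Function.update_of_ne hax,
        ih (List.nodup_cons.mp hl).2 hx']
      ring

lemma csSup_image_add {S : Set ℝ} (hne : S.Nonempty) (hbdd : BddAbove S) (c : ℝ) :
    sSup ((fun v => v + c) '' S) = sSup S + c := by
  apply IsLUB.csSup_eq _ (hne.image _)
  constructor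
  · rintro v ⟨w, hw, rfl⟩
    exact add_le_add_left (le_csSup hbdd hw) c
  · intro b hb
    have h1 : ∀ w ∈ S, w ≤ b - c := by
      intro w hw
      have h2 : w + c ≤ b := hb ⟨w, hw, rfl⟩
      linarith
    linarith [csSup_le hne h1]

lemma mem_of_getLast? {l : List P} {c : P} (h : l.getLast? = some c) : c ∈ l := by
  obtain ⟨hne, heq⟩ := List.mem_getLast?_eq_getLast (show c ∈ l.getLast? by rw [h]; rfl)
  rw [heq]
  exact List.getLast_mem hne

lemma exists_chain_between [Fintype P] {x y : P} (hxy : x ≤ y) :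
    ∃ l : List P, l.Chain' (· ⋖ ·) ∧ l.head? = some x ∧ l.getLast? = some y := by
  have wf : WellFounded ((· > ·) : P → P → Prop) := Finite.to_wellFoundedGT.wf
  refine wf.induction
    (C := fun x => x ≤ y →
      ∃ l : List P, l.Chain' (· ⋖ ·) ∧ l.head? = some x ∧ l.getLast? = some y) x ?_ hxy
  intro a IH ha
  rcases eq_or_lt_of_le ha with rfl | hlt
  · exact ⟨[a], List.isChain_singleton a, rfl, rfl⟩
  · obtain ⟨z, hzy, hz⟩ := Finite.exists_le_minimal (p := fun u => a < u ∧ u ≤ y) ⟨hlt, le_rfl⟩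
    have hcov : a ⋖ z := by
      refine ⟨hz.1.1, ?_⟩
      intro w hw hwz
      exact absurd (hz.2 ⟨hw, hwz.le.trans hz.1.2⟩ hwz.le) (not_le_of_gt hwz)
    obtain ⟨l, hl, hhead, hlast⟩ := IH z hz.1.1 hz.1.2
    refine ⟨a :: l, ?_, rfl, ?_⟩
    · apply List.isChain_cons.mpr
      refine ⟨?_, hl⟩
      intro b hb
      rw [hhead, Option.mem_some_iff] at hb
      subst hb
      exact hcov
    · cases l with
      | nil => simp at hhead
      | cons b t => rw [List.getLast?_cons_cons]; exact hlast

lemma glue_chains {l m : List P} {c : P} (hl : l.Chain' (· ⋖ ·)) (hm : m.Chain' (· ⋖ ·))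
    (h1 : l.getLast? = some c) (h2 : m.head? = some c) :
    ∃ n : List P, n.Chain' (· ⋖ ·) ∧ n.head? = l.head? ∧ n.getLast? = m.getLast? ∧
      ∀ u, (u ∈ l ∨ u ∈ m) → u ∈ n := by
  cases m with
  | nil => simp at h2
  | cons c' t =>
    have hc : c' = c := by simpa using h2
    subst hc
    refine ⟨l ++ t, ?_, ?_, ?_, ?_⟩
    · refine hl.append (List.isChain_cons.mp hm).2 ?_
      intro a ha b hb
      rw [h1, Option.mem_some_iff] at ha
      subst ha
      exact (List.isChain_cons.mp hm).1 b hb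
    · cases l with
      | nil => simp at h1
      | cons a s => rfl
    · cases t with
      | nil => simp [h1]
      | cons b t' =>
        rw [List.getLast?_append_of_ne_nil _ (by simp), List.getLast?_cons_cons]
    · intro u hu
      rcases hu with hu | hu
      · exact List.mem_append_left _ hu
      · rcases List.mem_cons.mp hu with rfl | hu
        · exact List.mem_append_left _ (mem_of_getLast? h1)
        · exact List.mem_append_right _ hu

lemma exists_maxChainThru_pair [Fintype P] {x y : P} (hxy : x ≤ y) :
    ∃ n ∈ maxChainsThru x, y ∈ n := by
  obtain ⟨a, hax, hamin⟩ := Finite.exists_le_minimal (p := fun _ : P => True) (a := x) trivial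
  obtain ⟨b, hyb, hbmax⟩ := Finite.exists_le_maximal (p := fun _ : P => True) (a := y) trivial
  obtain ⟨l1, c1, h1, g1⟩ := exists_chain_between hax
  obtain ⟨l2, c2, h2, g2⟩ := exists_chain_between hxy
  obtain ⟨l3, c3, h3, g3⟩ := exists_chain_between hyb
  obtain ⟨n1, cn1, hn1, gn1, mem1⟩ := glue_chains c1 c2 g1 h2
  obtain ⟨n, cn, hn, gn, memn⟩ := glue_chains cn1 c3 (gn1.trans g2) h3
  refine ⟨n, ⟨cn, ⟨a, by rw [hn, hn1, h1], fun w hw => hamin.2 trivial hw⟩,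
    ⟨b, by rw [gn, g3], fun w hw => hbmax.2 trivial hw⟩,
    memn _ (Or.inl (mem1 _ (Or.inr (List.mem_of_mem_head? (by rw [h2]; rfl)))))⟩,
    memn _ (Or.inr (List.mem_of_mem_head? (by rw [h3]; rfl)))⟩

lemma tau_noncommute [Fintype P] {x y : P} (h : x < y) :
    ∃ g : P → ℝ, InChainPolytope P g ∧ tauPL x (tauPL y g) ≠ tauPL y (tauPL x g) := by
  classical
  refine ⟨fun _ => 0, ⟨fun _ => le_rfl, fun l _ => by simp⟩, ?_⟩
  intro hEq
  have hzero : ∀ e : P,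
      sSup ((fun l : List P => (l.map (fun _ : P => (0:ℝ))).sum) '' maxChainsThru e) = 0 := by
    intro e
    refine IsGreatest.csSup_eq ⟨?_, ?_⟩
    · obtain ⟨n, hn, -⟩ := exists_maxChainThru_pair (le_refl e)
      exact ⟨n, hn, by simp⟩
    · rintro v ⟨l, hl, rfl⟩
      simp
  have h0 : ∀ e : P, tauPL e (fun _ : P => (0:ℝ)) = Function.update (fun _ : P => (0:ℝ)) e 1 := by
    intro e
    rw [tauPL_def, hzero]
    norm_num
  have hone : sSup ((fun l : List P =>
      (l.map (Function.update (fun _ : P => (0:ℝ)) y 1)).sum) '' maxChainsThru x) = 1 := by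
    refine IsGreatest.csSup_eq ⟨?_, ?_⟩
    · obtain ⟨n, hn, hyn⟩ := exists_maxChainThru_pair h.le
      refine ⟨n, hn, ?_⟩
      dsimp only
      rw [sum_map_update_of_mem _ y 1 (chain_nodup hn.1) hyn]
      simp
    · rintro v ⟨l, hl, rfl⟩
      dsimp only
      by_cases hy : y ∈ l
      · rw [sum_map_update_of_mem _ y 1 (chain_nodup hl.1) hy]; simp
      · rw [sum_map_update_of_not_mem _ y 1 hy]; simp
  have hx1 : tauPL x (tauPL y (fun _ : P => (0:ℝ))) x = 0 := by
    rw [h0 y, tauPL_def, Function.update_self, hone]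
    norm_num
  have hx2 : tauPL y (tauPL x (fun _ : P => (0:ℝ))) x = 1 := by
    rw [h0 x, tauPL_def, Function.update_of_ne h.ne, Function.update_self]
  rw [hEq, hx2] at hx1
  exact one_ne_zero hx1

lemma tPL_noncommute [Fintype P] {x y : P} (hxy : x ⋖ y) :
    ∃ f : P → ℝ, InORPolytope P f ∧ tPL x (tPL y f) ≠ tPL y (tPL x f) := by
  classical
  set f : P → ℝ := fun u => if y ≤ u then 0 else if x ≤ u then 1/4 else 1/2 with hf
  have hyx : ¬ y ≤ x := not_le_of_gt hxy.lt
  have hfx : f x = 1/4 := by rw [hf]; simp [hyx]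
  have hfy : f y = 0 := by rw [hf]; simp
  have hfhigh : ∀ u : P, u < y → u ≠ x → f u = 1/2 := by
    intro u hu hune
    have h1 : ¬ y ≤ u := not_le_of_gt hu
    have h2 : ¬ x ≤ u := fun hc => hxy.2 (hc.lt_of_ne (Ne.symm hune)) hu
    rw [hf]; simp [h1, h2]
  have hfOR : InORPolytope P f := by
    constructor
    · intro u; rw [hf]; dsimp only; split_ifs <;> norm_num
    · intro u v huv
      by_cases hyv : y ≤ v
      · have h0 : f v = 0 := by rw [hf]; simp [hyv]
        rw [h0, hf]; dsimp only; split_ifs <;> norm_num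
      · have hyu : ¬ y ≤ u := fun hc => hyv (hc.trans huv)
        by_cases hxv : x ≤ v
        · have h0 : f v = 1/4 := by rw [hf]; simp [hyv, hxv]
          by_cases hxu : x ≤ u
          · rw [h0, hf]; simp [hyu, hxu]
          · rw [h0, hf]; simp [hyu, hxu]; norm_num
        · have hxu : ¬ x ≤ u := fun hc => hxv (hc.trans huv)
          rw [hf]; simp [hyu, hxu, hyv, hxv]
  refine ⟨f, hfOR, ?_⟩
  intro hEq
  have hne : x ≠ y := hxy.lt.ne
  have hIxlb : (1:ℝ)/2 ≤ sInf (IOR f x) := by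
    refine le_csInf ?_ ?_
    · obtain ⟨z, hz⟩ := exists_cocover x
      exact ⟨_, z, hz, rfl⟩
    · rintro v ⟨z, hz, rfl⟩
      rcases cocovBy_toHat_cases hz with rfl | ⟨u, rfl, hu⟩
      · rw [hatOR_bot]; norm_num
      · rw [hatOR_toHat, hfhigh u (hu.lt.trans hxy.lt) hu.lt.ne]
  have hIy : sInf (IOR f y) = 1/4 := by
    refine IsLeast.csInf_eq
      ⟨⟨toHat x, toHat_covBy_toHat_iff.mpr hxy, by rw [hatOR_toHat, hfx]⟩, ?_⟩
    rintro v ⟨z, hz, rfl⟩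
    rcases cocovBy_toHat_cases hz with rfl | ⟨u, rfl, hu⟩
    · rw [hatOR_bot]; norm_num
    · rw [hatOR_toHat]
      rcases eq_or_ne u x with rfl | hux
      · rw [hfx]
      · rw [hfhigh u hu.lt hux]; norm_num
  have hSy : ∀ g : P → ℝ, (∀ u : P, y ⋖ u → g u = 0) → sSup (SOR g y) = 0 := by
    intro g hgz
    refine IsGreatest.csSup_eq ⟨?_, ?_⟩
    · obtain ⟨z, hz⟩ := exists_cover y
      refine ⟨z, hz, ?_⟩
      rcases covBy_toHat_cases hz with rfl | ⟨u, rfl, hu⟩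
      · rw [hatOR_top]
      · rw [hatOR_toHat, hgz u hu]
    · rintro v ⟨z, hz, rfl⟩
      rcases covBy_toHat_cases hz with rfl | ⟨u, rfl, hu⟩
      · rw [hatOR_top]
      · rw [hatOR_toHat, hgz u hu]
  have hSyf : sSup (SOR f y) = 0 := hSy f (fun u hu => by rw [hf]; simp [hu.lt.le])
  have htyf : tPL y f = Function.update f y (1/4) := by
    rw [tPL_def, hSyf, hIy, hfy]
    norm_num
  have hSx2 : sSup (SOR (Function.update f y (1/4)) x) = 1/4 := by
    refine IsGreatest.csSup_eq
      ⟨⟨toHat y, toHat_covBy_toHat_iff.mpr hxy, by rw [hatOR_toHat, Function.update_self]⟩, ?_⟩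
    rintro v ⟨z, hz, rfl⟩
    rcases covBy_toHat_cases hz with rfl | ⟨u, rfl, hu⟩
    · exact absurd hz (not_covBy_of_lt_of_lt (toHat_lt_toHat_iff.mpr hxy.lt) (toHat_lt_top y))
    · rw [hatOR_toHat]
      rcases eq_or_ne u y with rfl | huy
      · rw [Function.update_self]
      · rw [Function.update_of_ne huy]
        by_cases hyu : y ≤ u
        · rw [hf]; simp [hyu]
        · rw [hf]; simp [hyu, hu.lt.le]
  have hIx2 : sInf (IOR (Function.update f y (1/4)) x) = sInf (IOR f x) := by
    rw [IOR_update f x y _ (fun hc => lt_asymm hxy.lt (toHat_lt_toHat_iff.mp hc.lt))]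
  have hLx : tPL x (tPL y f) x = 1/4 + sInf (IOR f x) - 1/4 := by
    rw [htyf, tPL_def, Function.update_self, hSx2, hIx2, Function.update_of_ne hne, hfx]
  have hRx : tPL y (tPL x f) x = sSup (SOR f x) + sInf (IOR f x) - 1/4 := by
    rw [tPL_def y (tPL x f), Function.update_of_ne hne, tPL_def, Function.update_self, hfx]
  have hx := congrFun hEq x
  rw [hLx, hRx] at hx
  have hSxf : sSup (SOR f x) = 1/4 := by linear_combination -hx
  have hLy : tPL x (tPL y f) y = 1/4 := by
    rw [tPL_def x (tPL y f), Function.update_of_ne (Ne.symm hne), htyf, Function.update_self]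
  have htxf : tPL x f = Function.update f x (sInf (IOR f x)) := by
    rw [tPL_def, hSxf, hfx]
    congr 1
    ring
  have hRy : (1:ℝ)/2 ≤ tPL y (tPL x f) y := by
    rw [htxf, tPL_def, Function.update_self, Function.update_of_ne (Ne.symm hne), hfy]
    have hS0 : sSup (SOR (Function.update f x (sInf (IOR f x))) y) = 0 := by
      apply hSy
      intro u hu
      have hux : u ≠ x := fun hc => by subst hc; exact lt_asymm hxy.lt hu.lt
      rw [Function.update_of_ne hux, hf]; simp [hu.lt.le]
    rw [hS0]
    have hI2 : (1:ℝ)/2 ≤ sInf (IOR (Function.update f x (sInf (IOR f x))) y) := by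
      refine le_csInf ⟨_, toHat x, toHat_covBy_toHat_iff.mpr hxy, rfl⟩ ?_
      rintro v ⟨z, hz, rfl⟩
      rcases cocovBy_toHat_cases hz with rfl | ⟨u, rfl, hu⟩
      · rw [hatOR_bot]; norm_num
      · rw [hatOR_toHat]
        rcases eq_or_ne u x with rfl | hux
        · rw [Function.update_self]; exact hIxlb
        · rw [Function.update_of_ne hux, hfhigh u hu.lt hux]
    simpa using hI2
  have hy := congrFun hEq y
  rw [hLy] at hy
  rw [← hy] at hRy
  norm_num at hRy

end AuxPL

/-- The piecewise-linear toggles `t_x : OR(P) → OR(P)` and `τ_x : C(P) → C(P)` are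
involutions; two toggles `t_x, t_y` commute (as maps on `OR(P)`) iff neither of `x, y`
covers the other; two toggles `τ_x, τ_y` commute (as maps on `C(P)`) iff `x = y` or
`x` and `y` are incomparable. -/
theorem pl_toggles_involutive_and_commute
    (P : Type*) [PartialOrder P] [Fintype P] :
    (∀ (x : P) (f : P → ℝ), InORPolytope P f → tPL x (tPL x f) = f) ∧
    (∀ (x : P) (g : P → ℝ), InChainPolytope P g → tauPL x (tauPL x g) = g) ∧
    (∀ x y : P,
      (∀ f : P → ℝ, InORPolytope P f → tPL x (tPL y f) = tPL y (tPL x f)) ↔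
        ¬ x ⋖ y ∧ ¬ y ⋖ x) ∧
    (∀ x y : P,
      (∀ g : P → ℝ, InChainPolytope P g → tauPL x (tauPL y g) = tauPL y (tauPL x g)) ↔
        x = y ∨ (¬ x ≤ y ∧ ¬ y ≤ x)) := by
  constructor
  · -- t_x is an involution
    intro x f _
    have hnc : ¬ toHat x ⋖ toHat x := fun h => h.ne rfl
    simp only [tPL_def]
    rw [SOR_update f x x _ hnc, IOR_update f x x _ hnc, Function.update_self,
      Function.update_idem]
    have hval : sSup (SOR f x) + sInf (IOR f x)
        - (sSup (SOR f x) + sInf (IOR f x) - f x) = f x := by ring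
    rw [hval, Function.update_eq_self]
  constructor
  · -- τ_x is an involution
    intro x g hg
    have hne : ((fun l => (l.map g).sum) '' maxChainsThru x).Nonempty := by
      obtain ⟨n, hn, -⟩ := exists_maxChainThru_pair (le_refl x)
      exact ⟨_, n, hn, rfl⟩
    have hbdd : BddAbove ((fun l => (l.map g).sum) '' maxChainsThru x) := by
      refine ⟨1, ?_⟩
      rintro v ⟨l, hl, rfl⟩
      exact hg.2 l (chain_cov_lt hl.1)
    set M : ℝ := sSup ((fun l => (l.map g).sum) '' maxChainsThru x) with hM
    have himg : (fun l => (l.map (Function.update g x (1 - M))).sum) '' maxChainsThru x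
        = (fun v => v + ((1 - M) - g x)) ''
            ((fun l => (l.map g).sum) '' maxChainsThru x) := by
      rw [Set.image_image]
      apply Set.image_congr
      intro l hl
      exact sum_map_update_of_mem g x (1 - M) (chain_nodup hl.1) hl.2.2.2
    have hval : sSup ((fun l => (l.map (Function.update g x (1 - M))).sum) ''
        maxChainsThru x) = 1 - g x := by
      rw [himg, csSup_image_add hne hbdd, ← hM]
      ring
    simp only [tauPL_def, ← hM]
    rw [hval, Function.update_idem]
    have h2 : 1 - (1 - g x) = g x := by ring
    rw [h2, Function.update_eq_self]
  constructor
  · -- commutation for t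
    intro x y
    constructor
    · intro hcomm
      constructor
      · intro h
        obtain ⟨f, hfOR, hne⟩ := tPL_noncommute h
        exact hne (hcomm f hfOR)
      · intro h
        obtain ⟨f, hfOR, hne⟩ := tPL_noncommute h
        exact hne (hcomm f hfOR).symm
    · rintro ⟨h1, h2⟩ f _
      rcases eq_or_ne x y with rfl | hne
      · rfl
      · have hnc1 : ¬ toHat x ⋖ toHat y := fun h => h1 (toHat_covBy_toHat_iff.mp h)
        have hnc2 : ¬ toHat y ⋖ toHat x := fun h => h2 (toHat_covBy_toHat_iff.mp h)
        simp only [tPL_def]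
        rw [SOR_update f x y _ hnc1, IOR_update f x y _ hnc2,
            SOR_update f y x _ hnc2, IOR_update f y x _ hnc1,
            Function.update_of_ne hne, Function.update_of_ne (Ne.symm hne)]
        exact Function.update_comm (Ne.symm hne) _ _ _
  · -- commutation for τ
    intro x y
    constructor
    · intro hcomm
      by_contra hcon
      rw [not_or] at hcon
      obtain ⟨hne0, hcomp⟩ := hcon
      rcases not_and_or.mp hcomp with h | h
      · obtain ⟨g, hgC, hgne⟩ := tau_noncommute (lt_of_le_of_ne (not_not.mp h) hne0)
        exact hgne (hcomm g hgC)
      · obtain ⟨g, hgC, hgne⟩ := tau_noncommute (lt_of_le_of_ne (not_not.mp h) (Ne.symm hne0))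
        exact hgne (hcomm g hgC).symm
    · rintro (rfl | ⟨h1, h2⟩) g _
      · rfl
      · have hne : x ≠ y := fun h => h1 (le_of_eq h)
        have key : ∀ (e e' : P) (c : ℝ), ¬ e ≤ e' → ¬ e' ≤ e →
            (fun l : List P => (l.map (Function.update g e' c)).sum) '' maxChainsThru e
            = (fun l : List P => (l.map g).sum) '' maxChainsThru e := by
          intro e e' c he1 he2
          apply Set.image_congr
          intro l hl
          have hnm : e' ∉ l := by
            intro hmem
            rcases chain_comparable hl.1 hmem hl.2.2.2 with hc | hc
            · exact he2 hc
            · exact he1 hc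
          exact sum_map_update_of_not_mem g e' c hnm
        simp only [tauPL_def]
        rw [key x y _ h1 h2, key y x _ h2 h1]
        exact Function.update_comm (Ne.symm hne) _ _ _
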